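/- Let C = {x ∈ ℝ^n × ℤ^q : f_i(x) ≤ b_i, i = 1, …, m} be a system of affine Chvátal inequalities where each f_i is given by a binary tree representation, with total ceiling count c ≥ 1 (the sum of the ceiling counts of these trees). Then there exists a system P = {(x, z) ∈ ℝ^n × ℤ^q × ℤ : f'_i(x, z) ≤ b'_i, i = 1, …, m+1} of affine Chvátal inequalities in one additional integer variable z, whose functions admit binary tree representations with total ceiling count at most c − 1, such that C is the projection of P onto the x-coordinates. -/
import Mathlib


/-- Binary tree representation of an affine Chvátal function on `ℝ^n`. -/
inductive ChvatalTree (n : ℕ) : Type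
  | leaf (a : Fin n → ℚ) (c : ℚ) : ChvatalTree n
  | ceil (t : ChvatalTree n) : ChvatalTree n
  | scale (a : ℚ) (t : ChvatalTree n) : ChvatalTree n
  | comb (a b : ℚ) (t₁ t₂ : ChvatalTree n) : ChvatalTree n

namespace ChvatalTree

/-- The function computed by the tree. -/
noncomputable def eval {n : ℕ} : ChvatalTree n → (Fin n → ℝ) → ℝ
  | leaf a c, x => (∑ j, (a j : ℝ) * x j) + (c : ℝ)
  | ceil t, x => (⌈t.eval x⌉ : ℝ)
  | scale a t, x => (a : ℝ) * t.eval x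
  | comb a b t₁ t₂, x => (a : ℝ) * t₁.eval x + (b : ℝ) * t₂.eval x

/-- All multiplicative edge labels are nonnegative rationals. -/
def Valid {n : ℕ} : ChvatalTree n → Prop
  | leaf _ _ => True
  | ceil t => t.Valid
  | scale a t => 0 ≤ a ∧ t.Valid
  | comb a b t₁ t₂ => 0 ≤ a ∧ 0 ≤ b ∧ t₁.Valid ∧ t₂.Valid

/-- The ceiling count of the tree. -/
def cc {n : ℕ} : ChvatalTree n → ℕ
  | leaf _ _ => 0
  | ceil t => t.cc + 1
  | scale _ t => t.cc
  | comb _ _ t₁ t₂ => t₁.cc + t₂.cc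

/-- All leaves are homogeneous linear functions. -/
def Linear {n : ℕ} : ChvatalTree n → Prop
  | leaf _ c => c = 0
  | ceil t => t.Linear
  | scale _ t => t.Linear
  | comb _ _ t₁ t₂ => t₁.Linear ∧ t₂.Linear

end ChvatalTree

namespace ChvatalTree

def lift {k : ℕ} : ChvatalTree k → ChvatalTree (k + 1)
  | leaf a c => leaf (Fin.snoc a 0) c
  | ceil t => ceil (lift t)
  | scale a t => scale a (lift t)
  | comb a b t₁ t₂ => comb a b (lift t₁) (lift t₂)

lemma eval_lift {k : ℕ} (t : ChvatalTree k) (v : Fin k → ℝ) (z : ℝ) :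
    (lift t).eval (Fin.snoc v z) = t.eval v := by
  induction t with
  | leaf a c =>
    simp [lift, eval, Fin.sum_univ_castSucc, Fin.snoc_castSucc, Fin.snoc_last]
  | ceil t ih => simp [lift, eval, ih]
  | scale a t ih => simp [lift, eval, ih]
  | comb a b t₁ t₂ ih₁ ih₂ => simp [lift, eval, ih₁, ih₂]

lemma valid_lift {k : ℕ} (t : ChvatalTree k) (h : t.Valid) : (lift t).Valid := by
  induction t with
  | leaf a c => trivial
  | ceil t ih => exact ih h
  | scale a t ih => exact ⟨h.1, ih h.2⟩
  | comb a b t₁ t₂ ih₁ ih₂ => exact ⟨h.1, h.2.1, ih₁ h.2.2.1, ih₂ h.2.2.2⟩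

lemma cc_lift {k : ℕ} (t : ChvatalTree k) : (lift t).cc = t.cc := by
  induction t with
  | leaf a c => rfl
  | ceil t ih => simp [lift, cc, ih]
  | scale a t ih => simp [lift, cc, ih]
  | comb a b t₁ t₂ ih₁ ih₂ => simp [lift, cc, ih₁, ih₂]

lemma eval_zleaf {k : ℕ} (c : ℚ) (v : Fin k → ℝ) (z : ℝ) :
    (leaf (Fin.snoc (0 : Fin k → ℚ) c) 0).eval (Fin.snoc v z) = (c : ℝ) * z := by
  simp [eval, Fin.sum_univ_castSucc, Fin.snoc_castSucc, Fin.snoc_last]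

def replace {k : ℕ} : ChvatalTree k → ChvatalTree (k + 1) × ChvatalTree k
  | leaf a c => (lift (leaf a c), leaf a c)
  | ceil t => (leaf (Fin.snoc (0 : Fin k → ℚ) 1) 0, t)
  | scale a t => (scale a (replace t).1, (replace t).2)
  | comb a b t₁ t₂ =>
      if t₁.cc = 0 then (comb a b (lift t₁) (replace t₂).1, (replace t₂).2)
      else (comb a b (replace t₁).1 (lift t₂), (replace t₁).2)

lemma replace_cc {k : ℕ} (t : ChvatalTree k) (h : 1 ≤ t.cc) :
    (replace t).1.cc + (replace t).2.cc + 1 = t.cc := by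
  induction t with
  | leaf a c => simp [cc] at h
  | ceil t ih => simp [replace, cc]
  | scale a t ih => simpa [replace, cc] using ih h
  | comb a b t₁ t₂ ih₁ ih₂ =>
    by_cases h1 : t₁.cc = 0
    · have : 1 ≤ t₂.cc := by simp [cc, h1] at h ⊢; omega
      have := ih₂ this
      simp [replace, h1, cc, cc_lift] at *
      omega
    · have : 1 ≤ t₁.cc := Nat.one_le_iff_ne_zero.mpr h1
      have := ih₁ this
      simp [replace, h1, cc, cc_lift] at *
      omega

lemma replace_valid {k : ℕ} (t : ChvatalTree k) (h : t.Valid) :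
    (replace t).1.Valid ∧ (replace t).2.Valid := by
  induction t with
  | leaf a c => exact ⟨valid_lift _ trivial, trivial⟩
  | ceil t ih => exact ⟨trivial, h⟩
  | scale a t ih =>
    obtain ⟨h1, h2⟩ := ih h.2
    exact ⟨⟨h.1, h1⟩, h2⟩
  | comb a b t₁ t₂ ih₁ ih₂ =>
    obtain ⟨ha, hb, hv1, hv2⟩ := h
    by_cases h1 : t₁.cc = 0
    · obtain ⟨p, q⟩ := ih₂ hv2
      simp only [replace, h1, if_pos]
      exact ⟨⟨ha, hb, valid_lift _ hv1, p⟩, q⟩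
    · obtain ⟨p, q⟩ := ih₁ hv1
      simp only [replace, h1, if_neg, ite_false]
      exact ⟨⟨ha, hb, p, valid_lift _ hv2⟩, q⟩

lemma replace_mono {k : ℕ} (t : ChvatalTree k) (hv : t.Valid) (h : 1 ≤ t.cc)
    (v : Fin k → ℝ) (z : ℝ) (hz : (⌈(replace t).2.eval v⌉ : ℝ) ≤ z) :
    t.eval v ≤ (replace t).1.eval (Fin.snoc v z) := by
  induction t with
  | leaf a c => simp [cc] at h
  | ceil t ih =>
    simp only [replace] at hz ⊢
    rw [eval_zleaf]
    simpa [eval] using hz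
  | scale a t ih =>
    simp only [replace, eval]
    have := ih hv.2 h hz
    have ha : (0 : ℝ) ≤ (a : ℝ) := by exact_mod_cast hv.1
    nlinarith
  | comb a b t₁ t₂ ih₁ ih₂ =>
    obtain ⟨ha, hb, hv1, hv2⟩ := hv
    have ha' : (0 : ℝ) ≤ (a : ℝ) := by exact_mod_cast ha
    have hb' : (0 : ℝ) ≤ (b : ℝ) := by exact_mod_cast hb
    by_cases h1 : t₁.cc = 0
    · have h2 : 1 ≤ t₂.cc := by simp [cc, h1] at h; omega
      simp only [replace, h1, if_pos] at hz ⊢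
      have := ih₂ hv2 h2 hz
      simp only [eval, eval_lift]
      nlinarith
    · have h2 : 1 ≤ t₁.cc := Nat.one_le_iff_ne_zero.mpr h1
      simp only [replace, h1, ite_false] at hz ⊢
      have := ih₁ hv1 h2 hz
      simp only [eval, eval_lift]
      nlinarith

lemma replace_eq {k : ℕ} (t : ChvatalTree k) (h : 1 ≤ t.cc) (v : Fin k → ℝ) :
    (replace t).1.eval (Fin.snoc v (⌈(replace t).2.eval v⌉ : ℝ)) = t.eval v := by
  induction t with
  | leaf a c => simp [cc] at h
  | ceil t ih =>
    simp only [replace]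
    rw [eval_zleaf]
    simp [eval]
  | scale a t ih => simp only [replace, eval] at *; rw [ih h]
  | comb a b t₁ t₂ ih₁ ih₂ =>
    by_cases h1 : t₁.cc = 0
    · have h2 : 1 ≤ t₂.cc := by simp [cc, h1] at h; omega
      simp only [replace, h1, if_pos, eval, eval_lift]
      rw [ih₂ h2]
    · have h2 : 1 ≤ t₁.cc := Nat.one_le_iff_ne_zero.mpr h1
      simp only [replace, h1, ite_false, eval, eval_lift]
      rw [ih₁ h2]

end ChvatalTree

/-- `f` is an affine Chvátal function. -/
def IsAffineChvatal {n : ℕ} (f : (Fin n → ℝ) → ℝ) : Prop :=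
  ∃ T : ChvatalTree n, T.Valid ∧ ∀ x, T.eval x = f x

/-- `f` is a Chvátal function (all leaves homogeneous linear). -/
def IsChvatal {n : ℕ} (f : (Fin n → ℝ) → ℝ) : Prop :=
  ∃ T : ChvatalTree n, T.Valid ∧ T.Linear ∧ ∀ x, T.eval x = f x

/-- A system of affine Chvátal inequalities over `ℝ^n × ℤ^q` with total
ceiling count `c ≥ 1` is the projection (onto the original variables) of a system of `m+1`
affine Chvátal inequalities in one extra integer variable, with total ceiling count
at most `c - 1`. -/
theorem reduce_ceiling_count {n q m : ℕ} (f : Fin m → ChvatalTree (n + q))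
    (hf : ∀ i, (f i).Valid) (b : Fin m → ℝ) (hcc : 1 ≤ ∑ i, (f i).cc) :
    ∃ (f' : Fin (m + 1) → ChvatalTree (n + q + 1)) (b' : Fin (m + 1) → ℝ),
      (∀ i, (f' i).Valid) ∧
      (∑ i, (f' i).cc) ≤ (∑ i, (f i).cc) - 1 ∧
      {v : Fin (n + q) → ℝ |
          (∀ j : Fin q, ∃ k : ℤ, v (Fin.natAdd n j) = (k : ℝ)) ∧
          ∀ i, (f i).eval v ≤ b i}
        = {v : Fin (n + q) → ℝ | ∃ zval : ℝ, (∃ k : ℤ, zval = (k : ℝ)) ∧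
            (∀ j : Fin q, ∃ k : ℤ, v (Fin.natAdd n j) = (k : ℝ)) ∧
            ∀ i, (f' i).eval (Fin.snoc v zval) ≤ b' i} := by
  classical
  obtain ⟨i₀, -, hi₀⟩ := Finset.exists_ne_zero_of_sum_ne_zero
    (show ∑ i, (f i).cc ≠ 0 by omega)
  have hcc₀ : 1 ≤ (f i₀).cc := Nat.one_le_iff_ne_zero.mpr hi₀
  set T := (ChvatalTree.replace (f i₀)).1 with hT
  set g := (ChvatalTree.replace (f i₀)).2 with hg
  set lastTree : ChvatalTree (n + q + 1) :=
    ChvatalTree.comb 1 1 (ChvatalTree.lift g)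
      (ChvatalTree.leaf (Fin.snoc (0 : Fin (n + q) → ℚ) (-1)) 0) with hlast
  have hlasteval : ∀ (v : Fin (n + q) → ℝ) (z : ℝ),
      lastTree.eval (Fin.snoc v z) = g.eval v - z := by
    intro v z
    simp only [hlast, ChvatalTree.eval, ChvatalTree.eval_lift, Fin.sum_univ_castSucc,
      Fin.snoc_castSucc, Fin.snoc_last, Pi.zero_apply, Rat.cast_zero, zero_mul,
      Finset.sum_const_zero]
    push_cast
    ring
  refine ⟨Fin.snoc (fun i => if i = i₀ then T else ChvatalTree.lift (f i)) lastTree,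
    Fin.snoc b 0, ?_, ?_, ?_⟩
  · intro i
    refine Fin.lastCases ?_ (fun i => ?_) i
    · rw [Fin.snoc_last]
      exact ⟨by norm_num, by norm_num,
        ChvatalTree.valid_lift _ ((ChvatalTree.replace_valid _ (hf i₀)).2), trivial⟩
    · rw [Fin.snoc_castSucc]
      by_cases h : i = i₀
      · simp only [h, if_pos]
        exact (ChvatalTree.replace_valid _ (hf i₀)).1
      · simp only [h, ite_false]
        exact ChvatalTree.valid_lift _ (hf i)
  · have key := ChvatalTree.replace_cc (f i₀) hcc₀
    rw [← hT, ← hg] at key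
    rw [Fin.sum_univ_castSucc]
    simp only [Fin.snoc_castSucc, Fin.snoc_last]
    have h1 : ∑ i : Fin m, (if i = i₀ then T else ChvatalTree.lift (f i)).cc
        = T.cc + ∑ i ∈ Finset.univ.erase i₀, (f i).cc := by
      rw [← Finset.add_sum_erase _ _ (Finset.mem_univ i₀), if_pos rfl]
      congr 1
      refine Finset.sum_congr rfl fun i hi => ?_
      rw [if_neg (Finset.ne_of_mem_erase hi), ChvatalTree.cc_lift]
    have h2 : ∑ i : Fin m, (f i).cc
        = (f i₀).cc + ∑ i ∈ Finset.univ.erase i₀, (f i).cc :=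
      (Finset.add_sum_erase _ _ (Finset.mem_univ i₀)).symm
    have h3 : lastTree.cc = g.cc := by
      simp [hlast, ChvatalTree.cc, ChvatalTree.cc_lift]
    omega
  · ext v
    simp only [Set.mem_setOf_eq]
    constructor
    · rintro ⟨hint, hle⟩
      refine ⟨(⌈g.eval v⌉ : ℝ), ⟨⌈g.eval v⌉, rfl⟩, hint, fun i => ?_⟩
      refine Fin.lastCases ?_ (fun i => ?_) i
      · rw [Fin.snoc_last, Fin.snoc_last, hlasteval]
        have := Int.le_ceil (g.eval v)
        linarith
      · rw [Fin.snoc_castSucc, Fin.snoc_castSucc]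
        by_cases h : i = i₀
        · rw [h, if_pos rfl, hT, hg, ChvatalTree.replace_eq (f i₀) hcc₀ v]
          exact hle i₀
        · rw [if_neg h, ChvatalTree.eval_lift]
          exact hle i
    · rintro ⟨z, ⟨k, hk⟩, hint, hle⟩
      refine ⟨hint, fun i => ?_⟩
      have hlastle := hle (Fin.last m)
      rw [Fin.snoc_last, Fin.snoc_last, hlasteval] at hlastle
      have hgz : g.eval v ≤ z := by linarith
      have hceil : (⌈g.eval v⌉ : ℝ) ≤ z := by
        rw [hk] at hgz ⊢
        exact_mod_cast Int.ceil_le.mpr (by exact_mod_cast hgz)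
      by_cases h : i = i₀
      · have h' := hle (Fin.castSucc i₀)
        rw [Fin.snoc_castSucc, Fin.snoc_castSucc, if_pos rfl] at h'
        rw [h]
        refine le_trans ?_ h'
        rw [hT]
        exact ChvatalTree.replace_mono (f i₀) (hf i₀) hcc₀ v z (by rw [← hg]; exact hceil)
      · have h' := hle (Fin.castSucc i)
        rw [Fin.snoc_castSucc, Fin.snoc_castSucc, if_neg h, ChvatalTree.eval_lift] at h'
        exact h'
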